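/- Let G = (A,B,C;E) be a bilaterally-complete tripartite graph with complete sides G[A∪B] and G[A∪C] and |A| = p. Then τ△(G) equals the minimum, over all B″ ⊆ B and C″ ⊆ C, of |E_{B″C″}| + p(|B| + |C| − |B″| − |C″|), where E_{B″C″} is the set of edges of G with one endpoint in B″ and the other in C″. -/

import Mathlib

open SimpleGraph

variable {V : Type*}

/-- The set of edges of a triangle, given by its vertex set `t`:
all unordered pairs of distinct vertices of `t`. -/
def triangleEdges (t : Finset V) : Set (Sym2 V) :=
  {e | ∃ u ∈ t, ∃ v ∈ t, u ≠ v ∧ e = s(u, v)}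

/-- `E'` is a `𝒯`-transversal of `G`: a set of edges of `G` meeting every triangle of `G`. -/
def IsTriTransversal (G : SimpleGraph V) (E' : Set (Sym2 V)) : Prop :=
  E' ⊆ G.edgeSet ∧ ∀ t : Finset V, G.IsNClique 3 t → ∃ e ∈ triangleEdges t, e ∈ E'

/-- `τ△ G`: the minimum cardinality of a `𝒯`-transversal of `G`. -/
noncomputable def triTransversalNum (G : SimpleGraph V) : ℕ :=
  sInf {n | ∃ E' : Set (Sym2 V), IsTriTransversal G E' ∧ E'.ncard = n}

/-- `P` is a packing in `G`: a set of triangles of `G` that are pairwise edge-disjoint. -/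
def IsTriPacking (G : SimpleGraph V) (P : Set (Finset V)) : Prop :=
  (∀ t ∈ P, G.IsNClique 3 t) ∧
    P.Pairwise fun t t' => Disjoint (triangleEdges t) (triangleEdges t')

/-- `ν△ G`: the maximum cardinality of a packing of triangles in `G`. -/
noncomputable def triPackingNum (G : SimpleGraph V) : ℕ :=
  sSup {n | ∃ P : Set (Finset V), IsTriPacking G P ∧ P.ncard = n}

/-- The set of edges of `G` with one endpoint in `M` and the other in `W`. -/
def edgesBetween (G : SimpleGraph V) (M W : Set V) : Set (Sym2 V) :=
  {e | e ∈ G.edgeSet ∧ ∃ u ∈ M, ∃ w ∈ W, e = s(u, w)}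

/-- `G` is tripartite with parts `A`, `B`, `C`: the vertex set is partitioned into
the three independent sets `A`, `B`, `C`. -/
def IsTripartition (G : SimpleGraph V) (A B C : Set V) : Prop :=
  A ∪ B ∪ C = Set.univ ∧ Disjoint A B ∧ Disjoint A C ∧ Disjoint B C ∧
    (∀ u ∈ A, ∀ v ∈ A, ¬G.Adj u v) ∧ (∀ u ∈ B, ∀ v ∈ B, ¬G.Adj u v) ∧
    (∀ u ∈ C, ∀ v ∈ C, ¬G.Adj u v)

/-- The side `G[X ∪ Y]` of a tripartite graph is a complete bipartite graph. -/
def CompleteSide (G : SimpleGraph V) (X Y : Set V) : Prop :=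
  ∀ x ∈ X, ∀ y ∈ Y, G.Adj x y

/-- `W` is a vertex cover of the subgraph edge-induced by the edge set `Y`. -/
def CoversEdges (W : Set V) (Y : Set (Sym2 V)) : Prop :=
  ∀ e ∈ Y, ∃ v ∈ W, v ∈ e

/-- `M` is a matching consisting of edges from the edge set `F`:
the edges of `M` are pairwise vertex-disjoint. -/
def IsMatchingIn (F : Set (Sym2 V)) (M : Set (Sym2 V)) : Prop :=
  M ⊆ F ∧ M.Pairwise fun e f => ∀ v, v ∈ e → v ∉ f

section Aux


lemma mem_triangleEdges' [DecidableEq V] {t : Finset V} {a b : V} (ha : a ∈ t) (hb : b ∈ t) (hab : a ≠ b) :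
    s(a, b) ∈ triangleEdges t := ⟨a, ha, b, hb, hab, rfl⟩

lemma triangleEdges_triple' [DecidableEq V] {a b c : V} {e : Sym2 V}
    (he : e ∈ triangleEdges ({a, b, c} : Finset V)) :
    e = s(a, b) ∨ e = s(a, c) ∨ e = s(b, c) := by
  obtain ⟨u, hu, v, hv, huv, rfl⟩ := he
  simp only [Finset.mem_insert, Finset.mem_singleton] at hu hv
  rcases hu with rfl | rfl | rfl <;> rcases hv with rfl | rfl | rfl <;>
    first
      | exact absurd rfl huv
      | exact Or.inl rfl
      | exact Or.inl Sym2.eq_swap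
      | exact Or.inr (Or.inl rfl)
      | exact Or.inr (Or.inl Sym2.eq_swap)
      | exact Or.inr (Or.inr rfl)
      | exact Or.inr (Or.inr Sym2.eq_swap)

lemma triangle_structure' [DecidableEq V] {G : SimpleGraph V} {A B C : Set V} (hpart : IsTripartition G A B C)
    {t : Finset V} (h : G.IsNClique 3 t) :
    ∃ a ∈ A, ∃ b ∈ B, ∃ c ∈ C, t = {a, b, c} := by
  obtain ⟨hcov, hdAB, hdAC, hdBC, iA, iB, iC⟩ := hpart
  obtain ⟨x, y, z, hxy, hxz, hyz, ht⟩ := Finset.card_eq_three.mp h.2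
  have hxt : x ∈ t := by rw [ht]; simp
  have hyt : y ∈ t := by rw [ht]; simp
  have hzt : z ∈ t := by rw [ht]; simp
  have axy : G.Adj x y := h.1 hxt hyt hxy
  have axz : G.Adj x z := h.1 hxt hzt hxz
  have ayz : G.Adj y z := h.1 hyt hzt hyz
  have hx : x ∈ A ∪ B ∪ C := hcov.symm ▸ Set.mem_univ x
  have hy : y ∈ A ∪ B ∪ C := hcov.symm ▸ Set.mem_univ y
  have hz : z ∈ A ∪ B ∪ C := hcov.symm ▸ Set.mem_univ z
  rw [Set.mem_union, Set.mem_union] at hx hy hz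
  rcases hx with (hx | hx) | hx <;> rcases hy with (hy | hy) | hy <;> rcases hz with (hz | hz) | hz <;>
    first
      | exact absurd axy (iA _ hx _ hy)
      | exact absurd axy (iB _ hx _ hy)
      | exact absurd axy (iC _ hx _ hy)
      | exact absurd axz (iA _ hx _ hz)
      | exact absurd axz (iB _ hx _ hz)
      | exact absurd axz (iC _ hx _ hz)
      | exact absurd ayz (iA _ hy _ hz)
      | exact absurd ayz (iB _ hy _ hz)
      | exact absurd ayz (iC _ hy _ hz)
      | exact ⟨x, hx, y, hy, z, hz, ht⟩
      | exact ⟨x, hx, z, hz, y, hy, by rw [ht]; ext w; simp; tauto⟩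
      | exact ⟨y, hy, x, hx, z, hz, by rw [ht]; ext w; simp; tauto⟩
      | exact ⟨y, hy, z, hz, x, hx, by rw [ht]; ext w; simp; tauto⟩
      | exact ⟨z, hz, x, hx, y, hy, by rw [ht]; ext w; simp; tauto⟩
      | exact ⟨z, hz, y, hy, x, hx, by rw [ht]; ext w; simp; tauto⟩

lemma disjoint_edgesBetween' {G : SimpleGraph V} {M W M' W' : Set V}
    (h1 : Disjoint W M') (h2 : Disjoint W W') :
    Disjoint (edgesBetween G M W) (edgesBetween G M' W') := by
  rw [Set.disjoint_left]
  rintro e ⟨-, u, hu, w, hw, rfl⟩ ⟨-, x, hx, y, hy, hxy⟩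
  rw [Sym2.eq_iff] at hxy
  rcases hxy with ⟨h3, h4⟩ | ⟨h3, h4⟩
  · exact Set.disjoint_left.mp h2 hw (by rw [h4]; exact hy)
  · exact Set.disjoint_left.mp h1 hw (by rw [h4]; exact hx)

lemma edgesBetween_comm' (G : SimpleGraph V) (M W : Set V) :
    edgesBetween G M W = edgesBetween G W M := by
  ext e
  constructor <;> rintro ⟨he, u, hu, w, hw, rfl⟩ <;>
    exact ⟨he, w, hw, u, hu, Sym2.eq_swap.symm⟩

lemma ncard_edgesBetween_complete' [Fintype V] {G : SimpleGraph V} {M W : Set V}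
    (hcomp : ∀ x ∈ M, ∀ y ∈ W, G.Adj x y) (hd : Disjoint M W) :
    (edgesBetween G M W).ncard = M.ncard * W.ncard := by
  classical
  have himg : edgesBetween G M W = (fun q : V × V => s(q.1, q.2)) '' (M ×ˢ W) := by
    ext e
    constructor
    · rintro ⟨he, u, hu, w, hw, rfl⟩
      exact ⟨(u, w), ⟨hu, hw⟩, rfl⟩
    · rintro ⟨⟨u, w⟩, ⟨hu, hw⟩, rfl⟩
      exact ⟨(G.mem_edgeSet).mpr (hcomp u hu w hw), u, hu, w, hw, rfl⟩
  have hinj : Set.InjOn (fun q : V × V => s(q.1, q.2)) (M ×ˢ W) := by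
    rintro ⟨u, w⟩ ⟨hu, hw⟩ ⟨x, y⟩ ⟨hx, hy⟩ h
    simp only [Sym2.eq_iff] at h
    rcases h with ⟨h1, h2⟩ | ⟨h1, h2⟩
    · simp only [Prod.mk.injEq]; exact ⟨h1, h2⟩
    · exact ((Set.disjoint_left.mp hd hu) (by rw [h1]; exact hy)).elim
  rw [himg, Set.ncard_image_of_injOn hinj, ← Nat.card_coe_set_eq,
    Nat.card_congr (Equiv.Set.prod M W), Nat.card_prod,
    Nat.card_coe_set_eq, Nat.card_coe_set_eq]

def degSet (A : Set V) (E' : Set (Sym2 V)) (v : V) : Set V := {a ∈ A | s(a, v) ∈ E'}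

noncomputable def deg (A : Set V) (E' : Set (Sym2 V)) (v : V) : ℕ := (degSet A E' v).ncard

lemma ncard_inter_edgesBetween' [Fintype V] {G : SimpleGraph V} {E' : Set (Sym2 V)}
    (hE : E' ⊆ G.edgeSet) {M W : Set V} (hd : Disjoint M W) :
    (E' ∩ edgesBetween G M W).ncard
      = ∑ w ∈ (Set.toFinite W).toFinset, deg M E' w := by
  classical
  have himg : E' ∩ edgesBetween G M W
      = (fun q : V × V => s(q.1, q.2)) '' {q : V × V | q.1 ∈ M ∧ q.2 ∈ W ∧ s(q.1, q.2) ∈ E'} := by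
    ext e; constructor
    · rintro ⟨he', he, u, hu, w, hw, rfl⟩
      exact ⟨(u, w), ⟨hu, hw, he'⟩, rfl⟩
    · rintro ⟨⟨u, w⟩, ⟨hu, hw, he'⟩, rfl⟩
      exact ⟨he', hE he', u, hu, w, hw, rfl⟩
  have hinj : Set.InjOn (fun q : V × V => s(q.1, q.2))
      {q : V × V | q.1 ∈ M ∧ q.2 ∈ W ∧ s(q.1, q.2) ∈ E'} := by
    rintro ⟨u, w⟩ ⟨hu, hw, -⟩ ⟨x, y⟩ ⟨hx, hy, -⟩ h
    simp only [Sym2.eq_iff] at h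
    rcases h with ⟨h1, h2⟩ | ⟨h1, h2⟩
    · simp only [Prod.mk.injEq]; exact ⟨h1, h2⟩
    · exact ((Set.disjoint_left.mp hd hu) (by rw [h1]; exact hy)).elim
  rw [himg, Set.ncard_image_of_injOn hinj,
    Set.ncard_eq_toFinset_card _ (Set.toFinite {q : V × V | q.1 ∈ M ∧ q.2 ∈ W ∧ s(q.1, q.2) ∈ E'}),
    Finset.card_eq_sum_card_fiberwise (f := Prod.snd) (t := (Set.toFinite W).toFinset)
      (fun q hq => (Set.Finite.mem_toFinset _).mpr ((Set.Finite.mem_toFinset _).mp hq).2.1)]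
  refine Finset.sum_congr rfl fun w hw => ?_
  have himg2 : (((Set.toFinite {q : V × V | q.1 ∈ M ∧ q.2 ∈ W ∧ s(q.1, q.2) ∈ E'}).toFinset.filter
        (fun q => q.2 = w)).image Prod.fst)
      = (Set.toFinite (degSet M E' w)).toFinset := by
    ext u
    simp only [Finset.mem_image, Finset.mem_filter, Set.Finite.mem_toFinset, Set.mem_setOf_eq,
      degSet, Set.mem_sep_iff]
    constructor
    · rintro ⟨⟨a, b⟩, ⟨⟨h1, h2, h3⟩, h4⟩, h5⟩
      dsimp only at h4 h5
      subst h4; subst h5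
      exact ⟨h1, h3⟩
    · rintro ⟨h1, h2⟩
      exact ⟨(u, w), ⟨⟨h1, (Set.Finite.mem_toFinset _).mp hw, h2⟩, rfl⟩, rfl⟩
  have hinj2 : Set.InjOn Prod.fst
      ((((Set.toFinite {q : V × V | q.1 ∈ M ∧ q.2 ∈ W ∧ s(q.1, q.2) ∈ E'}).toFinset.filter
        (fun q => q.2 = w)) : Finset (V × V)) : Set (V × V)) := by
    rintro ⟨a, b⟩ hab ⟨a', b'⟩ hab' h
    dsimp only at h
    subst h
    have hb := (Finset.mem_filter.mp hab).2
    have hb' := (Finset.mem_filter.mp hab').2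
    dsimp only at hb hb'
    rw [Prod.mk.injEq]
    exact ⟨rfl, hb.trans hb'.symm⟩
  rw [deg, Set.ncard_eq_toFinset_card _ (Set.toFinite _), ← himg2,
    Finset.card_image_of_injOn hinj2]

lemma layercake {α : Type*} (s : Finset α) (g : α → ℕ) (p : ℕ)
    (hg : ∀ a ∈ s, g a ≤ p) :
    ∑ θ ∈ Finset.Icc 1 p, (s.filter fun a => θ ≤ g a).card = ∑ a ∈ s, g a := by
  classical
  have h1 : ∀ θ, (s.filter fun a => θ ≤ g a).card = ∑ a ∈ s, if θ ≤ g a then 1 else 0 :=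
    fun θ => Finset.card_filter _ _
  simp only [h1]
  rw [Finset.sum_comm]
  refine Finset.sum_congr rfl fun a ha => ?_
  rw [← Finset.card_filter]
  have h2 : (Finset.Icc 1 p).filter (fun θ => θ ≤ g a) = Finset.Icc 1 (g a) := by
    ext θ
    simp only [Finset.mem_filter, Finset.mem_Icc]
    have := hg a ha
    omega
  rw [h2, Nat.card_Icc]
  omega

lemma layercake' {α : Type*} (s : Finset α) (g : α → ℕ) (p : ℕ)
    (hg : ∀ a ∈ s, g a ≤ p) :
    ∑ θ ∈ Finset.Icc 1 p, (s.filter fun a => p < g a + θ).card = ∑ a ∈ s, g a := by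
  classical
  have h1 : ∀ θ, (s.filter fun a => p < g a + θ).card = ∑ a ∈ s, if p < g a + θ then 1 else 0 :=
    fun θ => Finset.card_filter _ _
  simp only [h1]
  rw [Finset.sum_comm]
  refine Finset.sum_congr rfl fun a ha => ?_
  rw [← Finset.card_filter]
  have h2 : (Finset.Icc 1 p).filter (fun θ => p < g a + θ) = Finset.Icc (p + 1 - g a) p := by
    ext θ
    simp only [Finset.mem_filter, Finset.mem_Icc]
    have := hg a ha
    omega
  rw [h2, Nat.card_Icc]
  have := hg a ha
  omega

lemma transversal_construction [Fintype V] {G : SimpleGraph V} {A B C : Set V}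
    (hpart : IsTripartition G A B C) (hAB : CompleteSide G A B) (hAC : CompleteSide G A C)
    {p : ℕ} (hp : A.ncard = p) {B'' C'' : Set V} (hB'' : B'' ⊆ B) (hC'' : C'' ⊆ C) :
    ∃ E' : Set (Sym2 V), IsTriTransversal G E' ∧
      E'.ncard = (edgesBetween G B'' C'').ncard
        + p * (B.ncard + C.ncard - B''.ncard - C''.ncard) := by
  classical
  have hdAB : Disjoint A B := hpart.2.1
  have hdAC : Disjoint A C := hpart.2.2.1
  have hdBC : Disjoint B C := hpart.2.2.2.1
  refine ⟨edgesBetween G B'' C'' ∪ edgesBetween G A (B \ B'') ∪ edgesBetween G A (C \ C''),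
    ⟨?_, ?_⟩, ?_⟩
  · rintro e ((⟨he, -⟩ | ⟨he, -⟩) | ⟨he, -⟩) <;> exact he
  · intro t ht
    obtain ⟨a, ha, b, hb, c, hc, rfl⟩ := triangle_structure' hpart ht
    have hat : a ∈ ({a, b, c} : Finset V) := by simp
    have hbt : b ∈ ({a, b, c} : Finset V) := by simp
    have hct : c ∈ ({a, b, c} : Finset V) := by simp
    have hab : a ≠ b := fun h => Set.disjoint_left.mp hdAB ha (by rw [h]; exact hb)
    have hac : a ≠ c := fun h => Set.disjoint_left.mp hdAC ha (by rw [h]; exact hc)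
    have hbc : b ≠ c := fun h => Set.disjoint_left.mp hdBC hb (by rw [h]; exact hc)
    by_cases hb' : b ∈ B''
    · by_cases hc' : c ∈ C''
      · refine ⟨s(b, c), mem_triangleEdges' hbt hct hbc, Or.inl (Or.inl
          ⟨G.mem_edgeSet.mpr (ht.1 (by simp) (by simp) hbc), b, hb', c, hc', rfl⟩)⟩
      · exact ⟨s(a, c), mem_triangleEdges' hat hct hac, Or.inr
          ⟨G.mem_edgeSet.mpr (hAC a ha c hc), a, ha, c, ⟨hc, hc'⟩, rfl⟩⟩
    · exact ⟨s(a, b), mem_triangleEdges' hat hbt hab, Or.inl (Or.inr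
        ⟨G.mem_edgeSet.mpr (hAB a ha b hb), a, ha, b, ⟨hb, hb'⟩, rfl⟩)⟩
  · have hd12 : Disjoint (edgesBetween G B'' C'') (edgesBetween G A (B \ B'')) :=
      disjoint_edgesBetween' (hdAC.symm.mono_left hC'')
        (hdBC.symm.mono hC'' Set.diff_subset)
    have hd13 : Disjoint (edgesBetween G B'' C'') (edgesBetween G A (C \ C'')) :=
      disjoint_edgesBetween' (hdAC.symm.mono_left hC'') Set.disjoint_sdiff_right
    have hd23 : Disjoint (edgesBetween G A (B \ B'')) (edgesBetween G A (C \ C'')) :=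
      disjoint_edgesBetween' (hdAB.symm.mono_left Set.diff_subset)
        (hdBC.mono Set.diff_subset Set.diff_subset)
    rw [Set.ncard_union_eq (Set.disjoint_union_left.mpr ⟨hd13, hd23⟩),
      Set.ncard_union_eq hd12,
      ncard_edgesBetween_complete' (fun x hx y hy => hAB x hx y hy.1)
        (hdAB.mono_right Set.diff_subset),
      ncard_edgesBetween_complete' (fun x hx y hy => hAC x hx y hy.1)
        (hdAC.mono_right Set.diff_subset),
      hp, Set.ncard_diff hB'', Set.ncard_diff hC'']
    have h1 : B''.ncard ≤ B.ncard := Set.ncard_le_ncard hB'' (Set.toFinite B)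
    have h2 : C''.ncard ≤ C.ncard := Set.ncard_le_ncard hC'' (Set.toFinite C)
    have h3 : B.ncard + C.ncard - B''.ncard - C''.ncard
        = (B.ncard - B''.ncard) + (C.ncard - C''.ncard) := by omega
    rw [h3, Nat.mul_add]
    ring

lemma key_inclusion [Fintype V] {G : SimpleGraph V} {A B C : Set V}
    (hAB : CompleteSide G A B) (hAC : CompleteSide G A C)
    {p : ℕ} (hp : A.ncard = p) {E' : Set (Sym2 V)}
    (hEtri : ∀ t : Finset V, G.IsNClique 3 t → ∃ e ∈ triangleEdges t, e ∈ E') (θ : ℕ) :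
    edgesBetween G {b ∈ B | deg A E' b < θ} {c ∈ C | deg A E' c + θ ≤ p}
      ⊆ E' ∩ edgesBetween G B C := by
  classical
  rintro e ⟨he, u, ⟨huB, hus⟩, w, ⟨hwC, hwt⟩, rfl⟩
  refine ⟨?_, he, u, huB, w, hwC, rfl⟩
  have hun : (degSet A E' u ∪ degSet A E' w).ncard < A.ncard := by
    have h1 := Set.ncard_union_le (degSet A E' u) (degSet A E' w)
    have h2 : (degSet A E' u).ncard = deg A E' u := rfl
    have h3 : (degSet A E' w).ncard = deg A E' w := rfl
    omega
  have hne : ¬ (A ⊆ degSet A E' u ∪ degSet A E' w) := fun hsub =>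
    absurd (Set.ncard_le_ncard hsub ((Set.toFinite _).union (Set.toFinite _))) (by omega)
  obtain ⟨a, ha, hanot⟩ := Set.not_subset.mp hne
  rw [Set.mem_union, not_or] at hanot
  have hau : s(a, u) ∉ E' := fun h => hanot.1 ⟨ha, h⟩
  have haw : s(a, w) ∉ E' := fun h => hanot.2 ⟨ha, h⟩
  have hclique : G.IsNClique 3 {a, u, w} := by
    rw [SimpleGraph.is3Clique_triple_iff]
    exact ⟨hAB a ha u huB, hAC a ha w hwC, G.mem_edgeSet.mp he⟩
  obtain ⟨e', he'mem, he'E⟩ := hEtri _ hclique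
  rcases triangleEdges_triple' he'mem with rfl | rfl | rfl
  · exact absurd he'E hau
  · exact absurd he'E haw
  · exact he'E

lemma tau_lower_bound [Fintype V] {G : SimpleGraph V} {A B C : Set V}
    (hpart : IsTripartition G A B C) (hAB : CompleteSide G A B) (hAC : CompleteSide G A C)
    {p : ℕ} (hp : A.ncard = p) (hp1 : 0 < p)
    {E' : Set (Sym2 V)} (hE' : IsTriTransversal G E') :
    ∃ B'' ⊆ B, ∃ C'' ⊆ C,
      (edgesBetween G B'' C'').ncard + p * (B.ncard + C.ncard - B''.ncard - C''.ncard)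
        ≤ E'.ncard := by
  classical
  obtain ⟨hEsub, hEtri⟩ := hE'
  have hdAB : Disjoint A B := hpart.2.1
  have hdAC : Disjoint A C := hpart.2.2.1
  have hdBC : Disjoint B C := hpart.2.2.2.1
  have hgle : ∀ v : V, deg A E' v ≤ p :=
    fun v => hp ▸ Set.ncard_le_ncard (Set.sep_subset _ _) (Set.toFinite A)
  have hABcount := ncard_inter_edgesBetween' hEsub hdAB
  have hACcount := ncard_inter_edgesBetween' hEsub hdAC
  -- E' splits into three parts
  have hsplit : (E' ∩ edgesBetween G A B).ncard + (E' ∩ edgesBetween G A C).ncard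
      + (E' ∩ edgesBetween G B C).ncard ≤ E'.ncard := by
    have d12 : Disjoint (edgesBetween G A B) (edgesBetween G A C) :=
      disjoint_edgesBetween' hdAB.symm hdBC
    have d13 : Disjoint (edgesBetween G A B) (edgesBetween G B C) := by
      have := disjoint_edgesBetween' (G := G) (M := B) (W := A) (M' := B) (W' := C) hdAB hdAC
      rwa [edgesBetween_comm' G B A] at this
    have d23 : Disjoint (edgesBetween G A C) (edgesBetween G B C) := by
      have := disjoint_edgesBetween' (G := G) (M := C) (W := A) (M' := B) (W' := C) hdAB hdAC
      rwa [edgesBetween_comm' G C A] at this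
    have hsub : (E' ∩ edgesBetween G A B) ∪ (E' ∩ edgesBetween G A C)
        ∪ (E' ∩ edgesBetween G B C) ⊆ E' := by
      rintro e ((⟨he, -⟩ | ⟨he, -⟩) | ⟨he, -⟩) <;> exact he
    calc (E' ∩ edgesBetween G A B).ncard + (E' ∩ edgesBetween G A C).ncard
          + (E' ∩ edgesBetween G B C).ncard
        = ((E' ∩ edgesBetween G A B) ∪ (E' ∩ edgesBetween G A C)
            ∪ (E' ∩ edgesBetween G B C)).ncard := by
          rw [Set.ncard_union_eq (Set.disjoint_union_left.mpr
              ⟨(d13.mono Set.inter_subset_right Set.inter_subset_right),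
               (d23.mono Set.inter_subset_right Set.inter_subset_right)⟩),
            Set.ncard_union_eq (d12.mono Set.inter_subset_right Set.inter_subset_right)]
      _ ≤ E'.ncard := Set.ncard_le_ncard hsub (Set.toFinite E')
  -- per-θ cost bound
  have hBcard : ∀ θ : ℕ, B.ncard ≤ ({b ∈ B | deg A E' b < θ} : Set V).ncard
      + ((Set.toFinite B).toFinset.filter fun b => θ ≤ deg A E' b).card := by
    intro θ
    have h1 : ({b ∈ B | deg A E' b < θ} : Set V).ncard
        = ((Set.toFinite B).toFinset.filter fun b => deg A E' b < θ).card := by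
      rw [Set.ncard_eq_toFinset_card _ (Set.toFinite _)]
      congr 1
      ext b
      simp [Set.Finite.mem_toFinset, Set.mem_setOf_eq]
    have h2 : B.ncard = (Set.toFinite B).toFinset.card :=
      Set.ncard_eq_toFinset_card _ _
    have h3 := Finset.card_filter_add_card_filter_not
      (s := (Set.toFinite B).toFinset) (p := fun b => deg A E' b < θ)
    have h4 : ((Set.toFinite B).toFinset.filter fun b => ¬ deg A E' b < θ)
        = ((Set.toFinite B).toFinset.filter fun b => θ ≤ deg A E' b) := by
      ext b; simp [not_lt]
    rw [h4] at h3
    omega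
  have hCcard : ∀ θ : ℕ, C.ncard ≤ ({c ∈ C | deg A E' c + θ ≤ p} : Set V).ncard
      + ((Set.toFinite C).toFinset.filter fun c => p < deg A E' c + θ).card := by
    intro θ
    have h1 : ({c ∈ C | deg A E' c + θ ≤ p} : Set V).ncard
        = ((Set.toFinite C).toFinset.filter fun c => deg A E' c + θ ≤ p).card := by
      rw [Set.ncard_eq_toFinset_card _ (Set.toFinite _)]
      congr 1
      ext c
      simp [Set.Finite.mem_toFinset, Set.mem_setOf_eq]
    have h2 : C.ncard = (Set.toFinite C).toFinset.card :=
      Set.ncard_eq_toFinset_card _ _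
    have h3 := Finset.card_filter_add_card_filter_not
      (s := (Set.toFinite C).toFinset) (p := fun c => deg A E' c + θ ≤ p)
    have h4 : ((Set.toFinite C).toFinset.filter fun c => ¬ deg A E' c + θ ≤ p)
        = ((Set.toFinite C).toFinset.filter fun c => p < deg A E' c + θ) := by
      ext c; simp [not_le]
    rw [h4] at h3
    omega
  have hcost : ∑ θ ∈ Finset.Icc 1 p, ((edgesBetween G {b ∈ B | deg A E' b < θ}
        {c ∈ C | deg A E' c + θ ≤ p}).ncard
        + p * (B.ncard + C.ncard - ({b ∈ B | deg A E' b < θ} : Set V).ncard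
            - ({c ∈ C | deg A E' c + θ ≤ p} : Set V).ncard))
      ≤ ∑ _θ ∈ Finset.Icc 1 p, E'.ncard := by
    have hterm : ∀ θ ∈ Finset.Icc 1 p, (edgesBetween G {b ∈ B | deg A E' b < θ}
          {c ∈ C | deg A E' c + θ ≤ p}).ncard
          + p * (B.ncard + C.ncard - ({b ∈ B | deg A E' b < θ} : Set V).ncard
              - ({c ∈ C | deg A E' c + θ ≤ p} : Set V).ncard)
        ≤ (E' ∩ edgesBetween G B C).ncard
          + (p * ((Set.toFinite B).toFinset.filter fun b => θ ≤ deg A E' b).card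
            + p * ((Set.toFinite C).toFinset.filter fun c => p < deg A E' c + θ).card) := by
      intro θ hθ
      have h1 : (edgesBetween G {b ∈ B | deg A E' b < θ}
            {c ∈ C | deg A E' c + θ ≤ p}).ncard ≤ (E' ∩ edgesBetween G B C).ncard :=
        Set.ncard_le_ncard (key_inclusion hAB hAC hp hEtri θ) (Set.toFinite _)
      have h2 := hBcard θ
      have h3 := hCcard θ
      have h5 : B.ncard + C.ncard - ({b ∈ B | deg A E' b < θ} : Set V).ncard
            - ({c ∈ C | deg A E' c + θ ≤ p} : Set V).ncard
          ≤ ((Set.toFinite B).toFinset.filter fun b => θ ≤ deg A E' b).card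
            + ((Set.toFinite C).toFinset.filter fun c => p < deg A E' c + θ).card := by
        omega
      calc _ ≤ (E' ∩ edgesBetween G B C).ncard
            + p * (((Set.toFinite B).toFinset.filter fun b => θ ≤ deg A E' b).card
              + ((Set.toFinite C).toFinset.filter fun c => p < deg A E' c + θ).card) :=
          Nat.add_le_add h1 (Nat.mul_le_mul_left p h5)
        _ = _ := by rw [Nat.mul_add]
    calc _ ≤ ∑ θ ∈ Finset.Icc 1 p, ((E' ∩ edgesBetween G B C).ncard
          + (p * ((Set.toFinite B).toFinset.filter fun b => θ ≤ deg A E' b).card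
            + p * ((Set.toFinite C).toFinset.filter fun c => p < deg A E' c + θ).card)) :=
        Finset.sum_le_sum hterm
      _ = p * (E' ∩ edgesBetween G B C).ncard
          + (p * ∑ b ∈ (Set.toFinite B).toFinset, deg A E' b
            + p * ∑ c ∈ (Set.toFinite C).toFinset, deg A E' c) := by
        rw [Finset.sum_add_distrib, Finset.sum_add_distrib, ← Finset.mul_sum, ← Finset.mul_sum,
          layercake _ _ p (fun b _ => hgle b), layercake' _ _ p (fun c _ => hgle c),
          Finset.sum_const, Nat.card_Icc, smul_eq_mul, Nat.add_sub_cancel]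
      _ ≤ ∑ _θ ∈ Finset.Icc 1 p, E'.ncard := by
        rw [Finset.sum_const, Nat.card_Icc, smul_eq_mul]
        have hle : (E' ∩ edgesBetween G B C).ncard
            + (∑ b ∈ (Set.toFinite B).toFinset, deg A E' b
              + ∑ c ∈ (Set.toFinite C).toFinset, deg A E' c) ≤ E'.ncard := by omega
        calc p * (E' ∩ edgesBetween G B C).ncard
              + (p * ∑ b ∈ (Set.toFinite B).toFinset, deg A E' b
                + p * ∑ c ∈ (Set.toFinite C).toFinset, deg A E' c)
            = p * ((E' ∩ edgesBetween G B C).ncard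
              + (∑ b ∈ (Set.toFinite B).toFinset, deg A E' b
                + ∑ c ∈ (Set.toFinite C).toFinset, deg A E' c)) := by ring
          _ ≤ p * E'.ncard := Nat.mul_le_mul_left p hle
          _ = (p + 1 - 1) * E'.ncard := by rw [Nat.add_sub_cancel]
  obtain ⟨θ, hθI, hθ⟩ := Finset.exists_le_of_sum_le (Finset.nonempty_Icc.mpr hp1) hcost
  exact ⟨{b ∈ B | deg A E' b < θ}, Set.sep_subset _ _,
    {c ∈ C | deg A E' c + θ ≤ p}, Set.sep_subset _ _, hθ⟩

theorem tau_eq_min_maoCheng_formula' [Fintype V] (G : SimpleGraph V)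
    (A B C : Set V) (hpart : IsTripartition G A B C)
    (hAB : CompleteSide G A B) (hAC : CompleteSide G A C)
    (p : ℕ) (hp : A.ncard = p) :
    (sInf {n | ∃ E' : Set (Sym2 V), IsTriTransversal G E' ∧ E'.ncard = n}) =
      sInf {n : ℕ | ∃ B'' ⊆ B, ∃ C'' ⊆ C,
        n = (edgesBetween G B'' C'').ncard +
              p * (B.ncard + C.ncard - B''.ncard - C''.ncard)} := by
  classical
  apply le_antisymm
  · refine le_csInf ⟨(edgesBetween G (∅ : Set V) (∅ : Set V)).ncard
        + p * (B.ncard + C.ncard - (∅ : Set V).ncard - (∅ : Set V).ncard),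
        ∅, Set.empty_subset B, ∅, Set.empty_subset C, rfl⟩ ?_
    rintro n ⟨B'', hB'', C'', hC'', rfl⟩
    obtain ⟨E', hE', hcard⟩ := transversal_construction hpart hAB hAC hp hB'' hC''
    exact Nat.sInf_le ⟨E', hE', hcard⟩
  · have hTne : {n | ∃ E' : Set (Sym2 V), IsTriTransversal G E' ∧ E'.ncard = n}.Nonempty := by
      obtain ⟨E', hE', -⟩ := transversal_construction hpart hAB hAC hp
        (Set.Subset.rfl (s := B)) (Set.Subset.rfl (s := C))
      exact ⟨E'.ncard, E', hE', rfl⟩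
    obtain ⟨E', hE', hcard⟩ := Nat.sInf_mem hTne
    rcases Nat.eq_zero_or_pos p with hp0 | hp1
    · refine le_trans (Nat.sInf_le ?_) (Nat.zero_le _)
      refine ⟨∅, Set.empty_subset B, ∅, Set.empty_subset C, ?_⟩
      have hemp : edgesBetween G (∅ : Set V) (∅ : Set V) = ∅ := by
        ext e
        simp [edgesBetween]
      simp [hemp, hp0]
    · obtain ⟨B'', hB'', C'', hC'', hle⟩ := tau_lower_bound hpart hAB hAC hp hp1 hE'
      calc sInf {n : ℕ | ∃ B'' ⊆ B, ∃ C'' ⊆ C,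
              n = (edgesBetween G B'' C'').ncard +
                p * (B.ncard + C.ncard - B''.ncard - C''.ncard)}
          ≤ (edgesBetween G B'' C'').ncard
              + p * (B.ncard + C.ncard - B''.ncard - C''.ncard) :=
            Nat.sInf_le ⟨B'', hB'', C'', hC'', rfl⟩
        _ ≤ E'.ncard := hle
        _ = _ := hcard

end Aux

/-- For a bilaterally-complete tripartite graph `G` with complete sides `G[A∪B]`,
`G[A∪C]` and `|A| = p`, `τ△(G)` equals the minimum over all `B'' ⊆ B` and `C'' ⊆ C`
of `|E_{B''C''}| + p·(|B| + |C| − |B''| − |C''|)`. -/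
theorem tau_eq_min_maoCheng_formula [Fintype V] (G : SimpleGraph V)
    (A B C : Set V) (hpart : IsTripartition G A B C)
    (hAB : CompleteSide G A B) (hAC : CompleteSide G A C)
    (p : ℕ) (hp : A.ncard = p) :
    triTransversalNum G =
      sInf {n : ℕ | ∃ B'' ⊆ B, ∃ C'' ⊆ C,
        n = (edgesBetween G B'' C'').ncard +
              p * (B.ncard + C.ncard - B''.ncard - C''.ncard)} :=
  tau_eq_min_maoCheng_formula' G A B C hpart hAB hAC p hp
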